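/- For every family cs of finite subsets of an alphabet, α̂(γ̃(cs)) equals the subset-closure of cs: α̂(γ̃(cs)) = { C' | ∃ C ∈ cs, C' ⊆ C }. -/

import Mathlib

variable {S : Type*} [DecidableEq S]

/-- Π C: permutation words of the finite set C (each element exactly once). -/
def permWords (C : Finset S) : Set (List S) :=
  {w | ∀ a : S, w.count a = if a ∈ C then 1 else 0}

/-- γ(C) = ⋃_{C' ⊆ C} Π C'. -/
def conc (C : Finset S) : Set (List S) :=
  {w | ∃ C' : Finset S, C' ⊆ C ∧ w ∈ permWords C'}

/-- γ̃(cs) = ⋃_{C ∈ cs} γ(C). -/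
def concTilde (cs : Set (Finset S)) : Set (List S) :=
  ⋃ C ∈ cs, conc C

/-- α̂(c) = { Σ(w) | w ∈ c }. -/
def alphaHat (c : Set (List S)) : Set (Finset S) :=
  {C | ∃ w ∈ c, w.toFinset = C}

lemma toFinset_of_perm {C : Finset S} {w : List S} (h : w ∈ permWords C) :
    w.toFinset = C := by
  ext a
  simp only [List.mem_toFinset, ← List.count_pos_iff, h a]
  split <;> simp_all

/-- α̂(γ̃(cs)) equals the subset-closure of cs. -/
theorem stmt_15 (cs : Set (Finset S)) :
    alphaHat (concTilde cs) = {C' | ∃ C ∈ cs, C' ⊆ C} := by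
  ext D
  constructor
  · rintro ⟨w, hw, rfl⟩
    simp only [concTilde, Set.mem_iUnion] at hw
    obtain ⟨C, hC, C', hsub, hperm⟩ := hw
    exact ⟨C, hC, by rw [toFinset_of_perm hperm]; exact hsub⟩
  · rintro ⟨C, hC, hsub⟩
    refine ⟨D.toList, ?_, by simp⟩
    simp only [concTilde, Set.mem_iUnion]
    refine ⟨C, hC, D, hsub, fun a => ?_⟩
    split <;> rename_i h
    · exact List.count_eq_one_of_mem D.nodup_toList (by simpa using h)
    · exact List.count_eq_zero.mpr (by simpa using h)
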